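/- Let ω : ℝ → ℝ be a weight on (ℝ, +). The following are equivalent: (1) liminf_{t→∞} ω(t)ω(−t)/|t| = 0; (2) for every t ∈ ℝ, liminf_{n→∞} ω(nt)ω(−nt)/n = 0; (3) liminf_{n→∞} ω(n)ω(−n)/n = 0; (4) there exists t₀ ≠ 0 with liminf_{n→∞} ω(n t₀)ω(−n t₀)/n = 0. -/

import Mathlib

/-- equivalence of the four liminf conditions for a weight on (ℝ,+). -/
theorem stmt2 (ω : ℝ → ℝ) (hcont : Continuous ω) (hpos : ∀ t, 0 < ω t)
    (hsub : ∀ s t, ω (s + t) ≤ ω s * ω t) :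
    List.TFAE
      [ (∀ ε > (0:ℝ), ∀ M > (0:ℝ), ∃ t > M, ω t * ω (-t) / |t| < ε),
        (∀ t : ℝ, ∀ ε > (0:ℝ), ∀ M : ℕ, ∃ n : ℕ, n > M ∧
          ω (n * t) * ω (-(n * t)) / n < ε),
        (∀ ε > (0:ℝ), ∀ M : ℕ, ∃ n : ℕ, n > M ∧ ω n * ω (-(n:ℝ)) / n < ε),
        (∃ t₀ : ℝ, t₀ ≠ 0 ∧ ∀ ε > (0:ℝ), ∀ M : ℕ, ∃ n : ℕ, n > M ∧
          ω (n * t₀) * ω (-(n * t₀)) / n < ε) ] := by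
  set f : ℝ → ℝ := fun x => ω x * ω (-x) with hfdef
  have hfpos : ∀ x, 0 < f x := fun x => mul_pos (hpos x) (hpos (-x))
  have hfsub : ∀ x y, f (x + y) ≤ f x * f y := by
    intro x y
    have h1 := hsub x y
    have h2 := hsub (-x) (-y)
    have hx := (hpos x).le
    have hy' := (hpos (-y)).le
    calc f (x + y) = ω (x + y) * ω (-(x + y)) := rfl
      _ = ω (x + y) * ω (-x + -y) := by ring_nf
      _ ≤ (ω x * ω y) * (ω (-x) * ω (-y)) := by
          exact mul_le_mul h1 h2 (hpos _).le (mul_pos (hpos x) (hpos y)).le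
      _ = f x * f y := by simp only [hfdef]; ring
  have hfeven : ∀ x, f (-x) = f x := by
    intro x; simp only [hfdef, neg_neg]; ring
  have hfabs : ∀ x, f x = f |x| := by
    intro x
    rcases abs_cases x with ⟨h, _⟩ | ⟨h, _⟩
    · rw [h]
    · rw [h, hfeven]
  have hfcont : Continuous f := hcont.mul (hcont.comp continuous_neg)
  tfae_have 1 → 2 := by
    intro h1 t ε hε M
    rcases eq_or_ne t 0 with rfl | ht
    · obtain ⟨n, hn⟩ := exists_nat_gt (max (M : ℝ) (ω 0 * ω 0 / ε))
      have hnM : (M : ℝ) < n := lt_of_le_of_lt (le_max_left _ _) hn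
      have hnε : ω 0 * ω 0 / ε < n := lt_of_le_of_lt (le_max_right _ _) hn
      have hnpos : (0 : ℝ) < n := lt_of_le_of_lt (le_max_of_le_left (Nat.cast_nonneg M)) hn
      refine ⟨n, Nat.cast_lt.mp hnM, ?_⟩
      rw [mul_zero, neg_zero]
      rw [div_lt_iff₀ hnpos]
      rw [div_lt_iff₀ hε] at hnε
      linarith [hnε]
    · have ha : (0 : ℝ) < |t| := abs_pos.mpr ht
      set a := |t| with hadef
      obtain ⟨u, hu, hC⟩ := (isCompact_Icc (a := -a) (b := a)).exists_isMaxOn (Set.nonempty_Icc.mpr (by linarith))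
        hfcont.continuousOn
      set C := f u with hCdef
      have hCpos : 0 < C := hfpos u
      have hC' : ∀ v ∈ Set.Icc (-a) a, f v ≤ C := fun v hv => hC hv
      have hε' : (0 : ℝ) < ε / (2 * a * C) := by positivity
      obtain ⟨s, hsM, hs⟩ := h1 (ε / (2 * a * C)) hε' ((M + 2) * a) (by positivity)
      have hspos : (0 : ℝ) < s := lt_trans (by positivity) hsM
      rw [abs_of_pos hspos] at hs
      set n := ⌊s / a⌋₊ with hndef
      have hsa : (M : ℝ) + 2 < s / a := (lt_div_iff₀ ha).mpr (by linarith)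
      have hnM : M < n := by
        have : (M + 1 : ℕ) ≤ n := Nat.le_floor (by push_cast; linarith)
        omega
      have hn1 : 1 ≤ n := by omega
      have hnpos : (0 : ℝ) < n := by
        have : 0 < n := by omega
        exact_mod_cast this
      have hna_le : (n : ℝ) * a ≤ s := by
        have := Nat.floor_le (show (0:ℝ) ≤ s / a by positivity)
        calc (n : ℝ) * a ≤ (s / a) * a := by nlinarith
          _ = s := div_mul_cancel₀ s (ne_of_gt ha)
      have hs_lt : s < ((n : ℝ) + 1) * a := by
        have := Nat.lt_floor_add_one (s / a)
        calc s = (s / a) * a := (div_mul_cancel₀ s (ne_of_gt ha)).symm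
          _ < ((n : ℝ) + 1) * a := by nlinarith
      have hmem : (n : ℝ) * a - s ∈ Set.Icc (-a) a := by
        constructor <;> nlinarith
      have hfna : f ((n : ℝ) * a) ≤ f s * C := by
        calc f ((n : ℝ) * a) = f (s + ((n : ℝ) * a - s)) := by ring_nf
          _ ≤ f s * f ((n : ℝ) * a - s) := hfsub _ _
          _ ≤ f s * C := by
              exact mul_le_mul_of_nonneg_left (hC' _ hmem) (hfpos s).le
      -- n ≥ s/(2a)
      have hn_ge : s / (2 * a) ≤ (n : ℝ) := by
        have hM0 : (0:ℝ) ≤ (M:ℝ) := Nat.cast_nonneg M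
        have h2a : 2 * a ≤ s := by nlinarith
        rw [div_le_iff₀ (by positivity)]
        nlinarith
      have hfs : f s / s < ε / (2 * a * C) := hs
      have key : f ((n : ℝ) * a) / n < ε := by
        have h1' : f ((n : ℝ) * a) / n ≤ (f s * C) / n := by gcongr
        have hs2a : s ≤ (n : ℝ) * (2 * a) := (div_le_iff₀ (by positivity)).mp hn_ge
        have hfsC : 0 < f s * C := mul_pos (hfpos s) hCpos
        have h2' : (f s * C) / n ≤ (f s * C) * (2 * a) / s := by
          rw [div_le_div_iff₀ hnpos hspos]
          have := mul_le_mul_of_nonneg_left hs2a hfsC.le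
          nlinarith
        have h3' : (f s * C) * (2 * a) / s < ε := by
          have hlt0 : f s < (ε / (2 * a * C)) * s := (div_lt_iff₀ hspos).mp hfs
          have hlt : f s * (C * (2 * a)) < ((ε / (2 * a * C)) * s) * (C * (2 * a)) :=
            mul_lt_mul_of_pos_right hlt0 (mul_pos hCpos (by positivity))
          have heq : ((ε / (2 * a * C)) * s) * (C * (2 * a)) = ε * s := by
            field_simp
          rw [div_lt_iff₀ hspos]
          calc f s * C * (2 * a) = f s * (C * (2 * a)) := by ring
            _ < ((ε / (2 * a * C)) * s) * (C * (2 * a)) := hlt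
            _ = ε * s := heq
        linarith
      refine ⟨n, hnM, ?_⟩
      show f ((n : ℝ) * t) / n < ε
      have : f ((n : ℝ) * t) = f ((n : ℝ) * a) := by
        rw [hfabs ((n : ℝ) * t), abs_mul, Nat.abs_cast, hadef]
      rw [this]; exact key
  tfae_have 2 → 3 := by
    intro h2 ε hε M
    obtain ⟨n, hn, h⟩ := h2 1 ε hε M
    rw [mul_one] at h
    exact ⟨n, hn, h⟩
  tfae_have 3 → 4 := by
    intro h3
    refine ⟨1, one_ne_zero, fun ε hε M => ?_⟩
    obtain ⟨n, hn, h⟩ := h3 ε hε M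
    exact ⟨n, hn, by rwa [mul_one]⟩
  tfae_have 4 → 1 := by
    rintro ⟨t₀, ht₀, h4⟩ ε hε M hM
    have ha : (0 : ℝ) < |t₀| := abs_pos.mpr ht₀
    set a := |t₀| with hadef
    obtain ⟨M', hM'⟩ := exists_nat_gt (M / a)
    obtain ⟨n, hn, h⟩ := h4 (ε * a) (by positivity) M'
    have hnR : (M' : ℝ) < n := Nat.cast_lt.mpr hn
    have hnpos : (0 : ℝ) < n := by
      have : 0 < n := by omega
      exact_mod_cast this
    have htM : M < (n : ℝ) * a := by
      have : M / a < (n : ℝ) := lt_trans hM' hnR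
      rw [div_lt_iff₀ ha] at this
      linarith
    refine ⟨(n : ℝ) * a, htM, ?_⟩
    have habs : |(n : ℝ) * a| = (n : ℝ) * a := abs_of_pos (by positivity)
    rw [habs]
    show f ((n : ℝ) * a) / ((n : ℝ) * a) < ε
    have heq : f ((n : ℝ) * a) = f ((n : ℝ) * t₀) := by
      rw [hfabs ((n : ℝ) * t₀), abs_mul, Nat.abs_cast, hadef]
    have h' : f ((n : ℝ) * t₀) / n < ε * a := h
    rw [heq, ← div_div]
    rw [div_lt_iff₀ ha] at *
    exact h'
  tfae_finish
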